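/- Let n be a positive integer and let U be a multilinear Littlewood family on n variables whose vertex degrees u_i = |{S ∈ U : i ∈ S}| satisfy u_1 ≥ u_2 ≥ … ≥ u_n ≥ 1. Let K = ⌈log₂(n+1)⌉ and for 1 ≤ k ≤ K define V_k = {S ∈ U : S ∩ {2^{k−1},…,2^k−1} ≠ ∅ and S ∩ {2^k,…,n} = ∅} and v_k = |V_k|. Then there exists a choice of signs h_S ∈ {−1,+1} for S ∈ U such that for every x ∈ {−1,+1}^n, |∑_{S ∈ U} h_S ∏_{i ∈ S} x_i| ≤ 1.18 · ∑_{k=1}^K 2^{k/2} · √(v_k). -/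

import Mathlib

open Finset Real

set_option maxHeartbeats 1000000

lemma sign_choice (m : ℕ) (V : Finset (Finset ℕ)) (hV : ∀ S ∈ V, S ⊆ Finset.Icc 1 m)
    (c : ℝ) (hc : Real.sqrt (2 * (m+1) * Real.log 2 * V.card) ≤ c) :
    ∃ ε : Finset ℕ → ℝ, (∀ S ∈ V, ε S = 1 ∨ ε S = -1) ∧
      ∀ x : ℕ → ℝ, (∀ i ∈ Finset.Icc 1 m, x i = 1 ∨ x i = -1) →
        |∑ S ∈ V, ε S * ∏ i ∈ S, x i| ≤ c := by
  rcases V.eq_empty_or_nonempty with rfl | hVne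
  · refine ⟨fun _ => 1, by simp, fun x hx => ?_⟩
    simp only [Finset.sum_empty, abs_zero]
    exact le_trans (Real.sqrt_nonneg _) hc
  set v : ℕ := V.card with hv
  have hv0 : 0 < v := Finset.card_pos.2 hVne
  set a : ℝ := 2 * (m+1) * Real.log 2 with haeq
  have ha : 0 < a := by
    have := Real.log_pos (by norm_num : (1:ℝ) < 2)
    positivity
  set l : ℝ := Real.sqrt (a / v) with hleq
  have hl : 0 < l := Real.sqrt_pos.2 (by positivity)
  have hl2 : l ^ 2 = a / v := Real.sq_sqrt (by positivity)
  -- sign pattern from a subset T ⊆ V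
  set sg : Finset (Finset ℕ) → Finset ℕ → ℝ := fun T S => if S ∈ T then 1 else -1 with hsg
  set σ : Finset ℕ → Finset ℕ → ℝ := fun S W => ∏ i ∈ S, (if i ∈ W then (1:ℝ) else -1) with hσ
  have hσpm : ∀ S W, σ S W = 1 ∨ σ S W = -1 := by
    intro S W
    refine Finset.prod_induction _ (fun t => t = 1 ∨ t = -1) ?_ (Or.inl rfl) ?_
    · rintro x y (rfl | rfl) (rfl | rfl) <;> norm_num
    · intro i _; split <;> simp
  set s : Finset (Finset ℕ) → Finset ℕ → ℝ := fun T W => ∑ S ∈ V, sg T S * σ S W with hs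
  set G : Finset (Finset ℕ) → ℝ :=
    fun T => ∑ W ∈ (Finset.Icc 1 m).powerset, (Real.exp (l * s T W) + Real.exp (-(l * s T W)))
    with hG
  -- key MGF computation
  have hmgf : ∀ (μ : ℝ) (W : Finset ℕ),
      ∑ T ∈ V.powerset, Real.exp (μ * s T W)
        = ∏ S ∈ V, (Real.exp (μ * σ S W) + Real.exp (-(μ * σ S W))) := by
    intro μ W
    rw [Finset.prod_add]
    refine Finset.sum_congr rfl fun T hT => ?_
    have hTV : T ⊆ V := Finset.mem_powerset.1 hT
    have : μ * s T W = (∑ S ∈ T, μ * σ S W) + ∑ S ∈ V \ T, -(μ * σ S W) := by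
      rw [hs]
      simp only [Finset.mul_sum]
      rw [← Finset.sum_sdiff hTV (f := fun S => μ * (sg T S * σ S W)), add_comm]
      congr 1
      · refine Finset.sum_congr rfl fun S hS => ?_
        rw [hsg]; simp only; rw [if_pos hS]; ring
      · refine Finset.sum_congr rfl fun S hS => ?_
        rw [hsg]; simp only; rw [if_neg (Finset.mem_sdiff.1 hS).2]; ring
    rw [this, Real.exp_add, Real.exp_sum, Real.exp_sum]
  have hcosh : ∀ (μ : ℝ) S W, Real.exp (μ * σ S W) + Real.exp (-(μ * σ S W))
      ≤ 2 * Real.exp (μ ^ 2 / 2) := by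
    intro μ S W
    have h2 : Real.exp μ + Real.exp (-μ) ≤ 2 * Real.exp (μ^2/2) := by
      have := Real.cosh_le_exp_half_sq μ
      rw [Real.cosh_eq] at this
      linarith
    rcases hσpm S W with h | h
    · rw [h, mul_one]; linarith
    · rw [h, mul_neg_one, neg_neg]; linarith
  have hsumG : ∑ T ∈ V.powerset, G T
      ≤ ∑ T ∈ V.powerset, (2 ^ (m+1) * Real.exp (v * l ^ 2 / 2)) := by
    rw [Finset.sum_comm]
    rw [Finset.sum_const, Finset.card_powerset]
    have hbd : ∀ W ∈ (Finset.Icc 1 m).powerset,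
        ∑ T ∈ V.powerset, (Real.exp (l * s T W) + Real.exp (-(l * s T W)))
          ≤ 2 * (2 * Real.exp (l ^ 2 / 2)) ^ v := by
      intro W _
      rw [Finset.sum_add_distrib, hmgf l W]
      have h2 : ∀ T ∈ V.powerset, Real.exp (-(l * s T W)) = Real.exp ((-l) * s T W) := by
        intro T _; ring_nf
      rw [Finset.sum_congr rfl h2, hmgf (-l) W]
      have b1 : ∏ S ∈ V, (Real.exp (l * σ S W) + Real.exp (-(l * σ S W)))
          ≤ (2 * Real.exp (l ^ 2 / 2)) ^ v := by
        rw [← Finset.prod_const]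
        exact Finset.prod_le_prod (fun S _ => by positivity) (fun S hS => hcosh l S W)
      have b2 : ∏ S ∈ V, (Real.exp ((-l) * σ S W) + Real.exp (-((-l) * σ S W)))
          ≤ (2 * Real.exp (l ^ 2 / 2)) ^ v := by
        rw [← Finset.prod_const]
        refine Finset.prod_le_prod (fun S _ => by positivity) (fun S hS => ?_)
        have := hcosh (-l) S W; simpa using this
      linarith
    calc ∑ W ∈ (Finset.Icc 1 m).powerset,
          ∑ T ∈ V.powerset, (Real.exp (l * s T W) + Real.exp (-(l * s T W)))
        ≤ ∑ W ∈ (Finset.Icc 1 m).powerset, 2 * (2 * Real.exp (l ^ 2 / 2)) ^ v :=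
          Finset.sum_le_sum hbd
      _ = 2 ^ m * (2 * (2 * Real.exp (l ^ 2 / 2)) ^ v) := by
          rw [Finset.sum_const, Finset.card_powerset, Nat.card_Icc]
          simp [nsmul_eq_mul]
      _ ≤ 2 ^ v • (2 ^ (m+1) * Real.exp (v * l ^ 2 / 2)) := by
          rw [nsmul_eq_mul, mul_pow, ← Real.exp_nat_mul]
          push_cast
          ring_nf
          apply le_of_eq
          ring
  -- extract a good sign pattern
  obtain ⟨T, hT, hGT⟩ := Finset.exists_le_of_sum_le (Finset.powerset_nonempty V) hsumG
  refine ⟨sg T, fun S _ => by rw [hsg]; dsimp only; split <;> simp, fun x hx => ?_⟩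
  set W : Finset ℕ := (Finset.Icc 1 m).filter (fun i => x i = 1) with hW
  have hWmem : W ∈ (Finset.Icc 1 m).powerset := Finset.mem_powerset.2 (Finset.filter_subset _ _)
  have hsum_eq : ∑ S ∈ V, sg T S * ∏ i ∈ S, x i = s T W := by
    refine Finset.sum_congr rfl fun S hS => ?_
    congr 1
    refine Finset.prod_congr rfl fun i hi => ?_
    have him : i ∈ Finset.Icc 1 m := hV S hS hi
    rcases hx i him with h1 | h1
    · rw [if_pos (Finset.mem_filter.2 ⟨him, h1⟩), h1]
    · rw [if_neg, h1]
      intro hiW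
      have := (Finset.mem_filter.1 hiW).2
      rw [h1] at this; norm_num at this
  rw [hsum_eq]
  -- G T bounds exp (l * |s T W|)
  have hGpos : ∀ W' ∈ (Finset.Icc 1 m).powerset,
      0 ≤ Real.exp (l * s T W') + Real.exp (-(l * s T W')) := fun W' _ => by positivity
  have hterm : Real.exp (l * |s T W|) ≤ G T := by
    have h1 : Real.exp (l * |s T W|) ≤ Real.exp (l * s T W) + Real.exp (-(l * s T W)) := by
      rcases abs_cases (s T W) with ⟨h, _⟩ | ⟨h, _⟩
      · rw [h]; nlinarith [Real.exp_pos (-(l * s T W))]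
      · rw [h, mul_neg]; linarith [Real.exp_pos (l * s T W)]
    exact h1.trans (Finset.single_le_sum hGpos hWmem)
  have hGA : G T ≤ 2 ^ (m+1) * Real.exp (v * l ^ 2 / 2) := hGT
  have hfin : Real.exp (l * |s T W|) ≤ Real.exp (Real.log (2 ^ (m+1)) + v * l ^ 2 / 2) := by
    rw [Real.exp_add, Real.exp_log (by positivity)]
    exact hterm.trans hGA
  have hlog : l * |s T W| ≤ Real.log (2 ^ (m+1)) + v * l ^ 2 / 2 := Real.exp_le_exp.1 hfin
  have hlog2 : Real.log ((2:ℝ) ^ (m+1)) = (m+1) * Real.log 2 := by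
    rw [Real.log_pow]; push_cast; ring
  have hvne : (v:ℝ) ≠ 0 := Nat.cast_ne_zero.2 hv0.ne'
  have hvl2 : (v:ℝ) * l ^ 2 / 2 = a / 2 := by
    rw [hl2, mul_div_cancel₀ _ hvne]
  have hbound : l * |s T W| ≤ a := by
    rw [hlog2] at hlog
    rw [hvl2] at hlog
    have h3 : (m+1 : ℝ) * Real.log 2 = a / 2 := by rw [haeq]; ring
    linarith
  -- a / l = sqrt (a * v)
  have hal : a = Real.sqrt (a * v) * l := by
    rw [hleq, ← Real.sqrt_mul (by positivity)]
    rw [show a * (v:ℝ) * (a / v) = a ^ 2 by field_simp]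
    rw [Real.sqrt_sq ha.le]
  have hfinal : |s T W| ≤ Real.sqrt (a * v) := by
    have h4 : l * |s T W| ≤ l * Real.sqrt (a * v) := by
      rw [hal] at hbound; linarith
    exact le_of_mul_le_mul_left h4 hl
  exact hfinal.trans hc

lemma clog_fiber (n k : ℕ) (hk : 1 ≤ k) (S : Finset ℕ) (hne : S.Nonempty)
    (hsub : S ⊆ Finset.Icc 1 n) :
    Nat.clog 2 (S.sup id + 1) = k ↔
      ((S ∩ Finset.Icc (2 ^ (k - 1)) (2 ^ k - 1)).Nonempty ∧
        S ∩ Finset.Icc (2 ^ k) n = ∅) := by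
  set M := S.sup id with hM
  have hMS : M ∈ S := by
    rw [hM, ← Finset.sup'_eq_sup hne id, ← Finset.max'_eq_sup']
    exact S.max'_mem hne
  have hub : ∀ i ∈ S, i ≤ M := fun i hi => Finset.le_sup (f := id) hi
  have hM1 : 1 ≤ M := (Finset.mem_Icc.1 (hsub hMS)).1
  have hMn : M ≤ n := (Finset.mem_Icc.1 (hsub hMS)).2
  constructor
  · intro hkk
    have hup : M + 1 ≤ 2 ^ k := by
      rw [← hkk]; exact Nat.le_pow_clog one_lt_two _
    have hlow : 2 ^ (k - 1) ≤ M := by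
      have h1 : k - 1 < Nat.clog 2 (M + 1) := by omega
      have := (Nat.lt_clog_iff_pow_lt one_lt_two).symm.2 h1
      omega
    constructor
    · exact ⟨M, Finset.mem_inter.2 ⟨hMS, Finset.mem_Icc.2 ⟨hlow, by omega⟩⟩⟩
    · rw [Finset.eq_empty_iff_forall_notMem]
      intro i hi
      have h2 := Finset.mem_inter.1 hi
      have h3 := Finset.mem_Icc.1 h2.2
      have := hub i h2.1
      omega
  · rintro ⟨⟨e, he⟩, hdisj⟩
    have h2 := Finset.mem_inter.1 he
    have h3 := Finset.mem_Icc.1 h2.2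
    have heM : e ≤ M := hub e h2.1
    have hMlt : M < 2 ^ k := by
      by_contra hcon
      have : M ∈ S ∩ Finset.Icc (2 ^ k) n :=
        Finset.mem_inter.2 ⟨hMS, Finset.mem_Icc.2 ⟨by omega, hMn⟩⟩
      rw [hdisj] at this
      exact absurd this (Finset.notMem_empty _)
    have hle : Nat.clog 2 (M + 1) ≤ k :=
      (Nat.clog_le_iff_le_pow one_lt_two).symm.1 (by omega)
    have hge : k - 1 < Nat.clog 2 (M + 1) :=
      (Nat.lt_clog_iff_pow_lt one_lt_two).symm.1 (by omega)
    omega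

theorem littlewood_chaining_upper_bound
    (n : ℕ) (hn : 0 < n) (U : Finset (Finset ℕ))
    (hU : ∀ S ∈ U, S.Nonempty ∧ S ⊆ Finset.Icc 1 n)
    (hmono : ∀ i ∈ Finset.Icc 1 n, ∀ j ∈ Finset.Icc 1 n, i ≤ j →
      (U.filter (fun S => j ∈ S)).card ≤ (U.filter (fun S => i ∈ S)).card)
    (hdeg : ∀ i ∈ Finset.Icc 1 n, 1 ≤ (U.filter (fun S => i ∈ S)).card) :
    ∃ h : Finset ℕ → ℝ,
      (∀ S ∈ U, h S = 1 ∨ h S = -1) ∧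
      ∀ x : ℕ → ℝ, (∀ i ∈ Finset.Icc 1 n, x i = 1 ∨ x i = -1) →
        |∑ S ∈ U, h S * ∏ i ∈ S, x i| ≤
          1.18 * ∑ k ∈ Finset.Icc 1 (Nat.clog 2 (n + 1)),
            (2:ℝ) ^ ((k:ℝ)/2) *
              Real.sqrt ((U.filter (fun S =>
                (S ∩ Finset.Icc (2 ^ (k - 1)) (2 ^ k - 1)).Nonempty ∧
                  S ∩ Finset.Icc (2 ^ k) n = ∅)).card) := by
  classical
  set K := Nat.clog 2 (n + 1) with hK
  set κ : Finset ℕ → ℕ := fun S => Nat.clog 2 (S.sup id + 1) with hκ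
  -- basic facts about M = sup
  have hMfacts : ∀ S ∈ U, 1 ≤ S.sup id ∧ S.sup id ≤ n := by
    intro S hS
    obtain ⟨hne, hsub⟩ := hU S hS
    have hMS : S.sup id ∈ S := by
      rw [← Finset.sup'_eq_sup hne id, ← Finset.max'_eq_sup']
      exact S.max'_mem hne
    exact ⟨(Finset.mem_Icc.1 (hsub hMS)).1, (Finset.mem_Icc.1 (hsub hMS)).2⟩
  have hmaps : ∀ S ∈ U, κ S ∈ Finset.Icc 1 K := by
    intro S hS
    obtain ⟨hM1, hMn⟩ := hMfacts S hS
    refine Finset.mem_Icc.2 ⟨?_, ?_⟩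
    · show 1 ≤ Nat.clog 2 (S.sup id + 1)
      have h0 : 2 ^ 0 < S.sup id + 1 := by simpa using Nat.lt_succ_of_le hM1
      have := (Nat.lt_clog_iff_pow_lt one_lt_two).symm.1 h0
      omega
    · show Nat.clog 2 (S.sup id + 1) ≤ K
      have h1 : n + 1 ≤ 2 ^ K := Nat.le_pow_clog one_lt_two _
      exact (Nat.clog_le_iff_le_pow one_lt_two).symm.1 (by omega)
  -- per-level sign choice
  have key : ∀ k : ℕ, ∃ ε : Finset ℕ → ℝ,
      (∀ S ∈ U.filter (fun S =>
          (S ∩ Finset.Icc (2 ^ (k - 1)) (2 ^ k - 1)).Nonempty ∧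
            S ∩ Finset.Icc (2 ^ k) n = ∅), ε S = 1 ∨ ε S = -1) ∧
      ∀ x : ℕ → ℝ, (∀ i ∈ Finset.Icc 1 n, x i = 1 ∨ x i = -1) →
        |∑ S ∈ U.filter (fun S =>
            (S ∩ Finset.Icc (2 ^ (k - 1)) (2 ^ k - 1)).Nonempty ∧
              S ∩ Finset.Icc (2 ^ k) n = ∅), ε S * ∏ i ∈ S, x i| ≤
          1.18 * ((2:ℝ) ^ ((k:ℝ)/2) *
            Real.sqrt ((U.filter (fun S =>
              (S ∩ Finset.Icc (2 ^ (k - 1)) (2 ^ k - 1)).Nonempty ∧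
                S ∩ Finset.Icc (2 ^ k) n = ∅)).card)) := by
    intro k
    set V := U.filter (fun S =>
      (S ∩ Finset.Icc (2 ^ (k - 1)) (2 ^ k - 1)).Nonempty ∧
        S ∩ Finset.Icc (2 ^ k) n = ∅) with hV
    set m := min (2 ^ k - 1) n with hm
    have hVsub : ∀ S ∈ V, S ⊆ Finset.Icc 1 m := by
      intro S hS i hi
      obtain ⟨hSU, hne, hdisj⟩ := Finset.mem_filter.1 hS
      have hin : i ∈ Finset.Icc 1 n := (hU S hSU).2 hi
      have h1 := Finset.mem_Icc.1 hin
      have h2 : i < 2 ^ k := by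
        by_contra hcon
        have : i ∈ S ∩ Finset.Icc (2 ^ k) n :=
          Finset.mem_inter.2 ⟨hi, Finset.mem_Icc.2 ⟨by omega, h1.2⟩⟩
        rw [hdisj] at this
        exact absurd this (Finset.notMem_empty _)
      have hp : 1 ≤ 2 ^ k := Nat.one_le_two_pow
      exact Finset.mem_Icc.2 ⟨h1.1, by omega⟩
    have hc : Real.sqrt (2 * (m + 1) * Real.log 2 * V.card) ≤
        1.18 * ((2:ℝ) ^ ((k:ℝ)/2) * Real.sqrt V.card) := by
      have hm2 : (m:ℝ) + 1 ≤ (2:ℝ) ^ k := by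
        have hp : 1 ≤ 2 ^ k := Nat.one_le_two_pow
        have : m + 1 ≤ 2 ^ k := by omega
        exact_mod_cast this
      have hlog := Real.log_two_lt_d9
      have hlogpos := Real.log_pos (by norm_num : (1:ℝ) < 2)
      have hpk : (0:ℝ) < (2:ℝ) ^ k := by positivity
      have h1 : 2 * ((m:ℝ) + 1) * Real.log 2 ≤ 1.3924 * (2:ℝ) ^ k := by
        nlinarith
      have hsq : Real.sqrt ((1.3924:ℝ) * (2:ℝ) ^ k) = 1.18 * (2:ℝ) ^ ((k:ℝ)/2) := by
        rw [Real.sqrt_mul (by norm_num)]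
        congr 1
        · rw [show (1.3924:ℝ) = 1.18 ^ 2 by norm_num, Real.sqrt_sq (by norm_num)]
        · rw [show ((2:ℝ) ^ k) = (2:ℝ) ^ (k:ℝ) from (Real.rpow_natCast 2 k).symm,
            Real.sqrt_eq_rpow, ← Real.rpow_mul (by norm_num), mul_one_div]
      calc Real.sqrt (2 * (m + 1) * Real.log 2 * V.card)
          = Real.sqrt (2 * ((m:ℝ) + 1) * Real.log 2) * Real.sqrt V.card := by
            rw [← Real.sqrt_mul (by positivity)]
        _ ≤ Real.sqrt (1.3924 * (2:ℝ) ^ k) * Real.sqrt V.card :=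
            mul_le_mul_of_nonneg_right (Real.sqrt_le_sqrt h1) (Real.sqrt_nonneg _)
        _ = 1.18 * ((2:ℝ) ^ ((k:ℝ)/2) * Real.sqrt V.card) := by
            rw [hsq]; ring
    obtain ⟨ε, h1, h2⟩ := sign_choice m V hVsub _ hc
    refine ⟨ε, h1, fun x hx => h2 x fun i hi => ?_⟩
    have := Finset.mem_Icc.1 hi
    exact hx i (Finset.mem_Icc.2 ⟨this.1, le_trans this.2 (by omega)⟩)
  choose ε hε1 hε2 using key
  have hself : ∀ S ∈ U, κ S = κ S ∧
      ((S ∩ Finset.Icc (2 ^ (κ S - 1)) (2 ^ κ S - 1)).Nonempty ∧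
        S ∩ Finset.Icc (2 ^ κ S) n = ∅) := by
    intro S hS
    refine ⟨rfl, ?_⟩
    have h1k : 1 ≤ κ S := (Finset.mem_Icc.1 (hmaps S hS)).1
    exact (clog_fiber n (κ S) h1k S (hU S hS).1 (hU S hS).2).1 rfl
  refine ⟨fun S => ε (κ S) S, ?_, ?_⟩
  · intro S hS
    exact hε1 (κ S) S (Finset.mem_filter.2 ⟨hS, (hself S hS).2⟩)
  · intro x hx
    rw [← Finset.sum_fiberwise_of_maps_to hmaps (fun S => ε (κ S) S * ∏ i ∈ S, x i),
      Finset.mul_sum]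
    refine le_trans (Finset.abs_sum_le_sum_abs _ _) (Finset.sum_le_sum ?_)
    intro k hk
    have h1k : 1 ≤ k := (Finset.mem_Icc.1 hk).1
    have hfib : U.filter (fun S => κ S = k) = U.filter (fun S =>
        (S ∩ Finset.Icc (2 ^ (k - 1)) (2 ^ k - 1)).Nonempty ∧
          S ∩ Finset.Icc (2 ^ k) n = ∅) := by
      apply Finset.filter_congr
      intro S hS
      exact clog_fiber n k h1k S (hU S hS).1 (hU S hS).2
    have hsum_eq : ∑ S ∈ U.filter (fun S => κ S = k), ε (κ S) S * ∏ i ∈ S, x i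
        = ∑ S ∈ U.filter (fun S =>
            (S ∩ Finset.Icc (2 ^ (k - 1)) (2 ^ k - 1)).Nonempty ∧
              S ∩ Finset.Icc (2 ^ k) n = ∅), ε k S * ∏ i ∈ S, x i := by
      refine Finset.sum_congr hfib fun S hS => ?_
      obtain ⟨hSU, hP⟩ := Finset.mem_filter.1 hS
      have : κ S = k := (clog_fiber n k h1k S (hU S hSU).1 (hU S hSU).2).2 hP
      rw [this]
    rw [hsum_eq]
    exact hε2 k x hx
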